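/- Let (A,B,C,D) be a discrete-time LTI system with A ∈ ℝ^{n×n}, B ∈ ℝ^{n×m}, C ∈ ℝ^{p×n}, D ∈ ℝ^{p×m}, let (u^d, y^d) be a length-T trajectory of this system, and let L ≤ T. Then the rank of the stacked Hankel matrix [H_L(u^d); H_L(y^d)] ∈ ℝ^{(m+p)L × (T−L+1)} is at most mL + n. -/
import Mathlib


open Matrix Finset

lemma state_formula {n m T : ℕ}
    (A : Matrix (Fin n) (Fin n) ℝ) (B : Matrix (Fin n) (Fin m) ℝ)
    (x : ℕ → Fin n → ℝ) (u : ℕ → Fin m → ℝ)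
    (hx : ∀ k, k + 1 < T → x (k+1) = A.mulVec (x k) + B.mulVec (u k)) :
    ∀ i j, j + i < T → x (j+i) = (A^i).mulVec (x j)
      + ∑ k ∈ Finset.range i, ((A^(i-1-k)) * B).mulVec (u (j+k)) := by
  intro i
  induction i with
  | zero => intro j h; simp
  | succ i ih =>
    intro j h
    have h1 : j + i + 1 < T := by omega
    have hstep := hx (j + i) h1
    have hrec := ih j (by omega)
    have hj : j + (i+1) = (j + i) + 1 := by omega
    rw [hj, hstep, hrec, Finset.sum_range_succ, Matrix.mulVec_add]
    have hsum : A.mulVec (∑ k ∈ Finset.range i, ((A^(i-1-k)) * B).mulVec (u (j+k)))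
        = ∑ k ∈ Finset.range i, ((A^(i+1-1-k)) * B).mulVec (u (j+k)) := by
      rw [show A.mulVec (∑ k ∈ Finset.range i, ((A^(i-1-k)) * B).mulVec (u (j+k)))
          = A.mulVecLin (∑ k ∈ Finset.range i, ((A^(i-1-k)) * B).mulVec (u (j+k))) from rfl,
        map_sum]
      refine Finset.sum_congr rfl fun k hk => ?_
      have hk' : k < i := Finset.mem_range.mp hk
      have hexp : A * (A^(i-1-k) * B) = A^(i+1-1-k) * B := by
        rw [← Matrix.mul_assoc, ← pow_succ', show i - 1 - k + 1 = i + 1 - 1 - k from by omega]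
      rw [Matrix.mulVecLin_apply, Matrix.mulVec_mulVec, hexp]
    rw [hsum, Matrix.mulVec_mulVec, ← pow_succ']
    simp [add_assoc]

lemma mulVec_sum' {α β : Type*} [Fintype α] (ι : Finset ℕ)
    (M : Matrix β α ℝ) (f : ℕ → α → ℝ) :
    M.mulVec (∑ k ∈ ι, f k) = ∑ k ∈ ι, M.mulVec (f k) :=
  map_sum M.mulVecLin f ι



/-- The depth-`L` Hankel matrix of a signal `u : {1,…,T} → ℝ^m` (indexed here by `Fin T`).
Its `j`-th column is the stacked vector `col(u j, u (j+1), …, u (j+L-1)) ∈ ℝ^{mL}`. -/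
def hankel (m T L : ℕ) (u : Fin T → Fin m → ℝ) :
    Matrix (Fin L × Fin m) (Fin (T + 1 - L)) ℝ :=
  fun ir j => if h : (j : ℕ) + (ir.1 : ℕ) < T then u ⟨(j : ℕ) + (ir.1 : ℕ), h⟩ ir.2 else 0

/-- `(u, y)` is a length-`L` trajectory of the discrete-time LTI system `(A, B, C, D)`:
there is a state sequence `x` with `x(k+1) = A x(k) + B u(k)` and `y(k) = C x(k) + D u(k)`. -/
def IsTrajectory (n m p L : ℕ)
    (A : Matrix (Fin n) (Fin n) ℝ) (B : Matrix (Fin n) (Fin m) ℝ)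
    (C : Matrix (Fin p) (Fin n) ℝ) (D : Matrix (Fin p) (Fin m) ℝ)
    (u : Fin L → Fin m → ℝ) (y : Fin L → Fin p → ℝ) : Prop :=
  ∃ x : Fin L → Fin n → ℝ,
    (∀ k : ℕ, (h : k + 1 < L) →
      x ⟨k + 1, h⟩ = A.mulVec (x ⟨k, by omega⟩) + B.mulVec (u ⟨k, by omega⟩)) ∧
    (∀ k : Fin L, y k = C.mulVec (x k) + D.mulVec (u k))

/-- If `(u^d, y^d)` is a length-`T` trajectory of the `n`-dimensional LTI system
`(A,B,C,D)` and `L ≤ T`, then the stacked Hankel matrix `[H_L(u^d); H_L(y^d)]`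
has rank at most `mL + n`. -/
theorem stacked_hankel_rank_le
    (n m p T L : ℕ) (hLT : L ≤ T)
    (A : Matrix (Fin n) (Fin n) ℝ) (B : Matrix (Fin n) (Fin m) ℝ)
    (C : Matrix (Fin p) (Fin n) ℝ) (D : Matrix (Fin p) (Fin m) ℝ)
    (ud : Fin T → Fin m → ℝ) (yd : Fin T → Fin p → ℝ)
    (htraj : IsTrajectory n m p T A B C D ud yd) :
    (Matrix.fromRows (hankel m T L ud) (hankel p T L yd)).rank ≤ m * L + n := by
  obtain ⟨x, hx1, hx2⟩ := htraj
  rcases Nat.eq_zero_or_pos L with hL | hL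
  · subst hL
    calc (Matrix.fromRows (hankel m T 0 ud) (hankel p T 0 yd)).rank
        ≤ Fintype.card (Fin 0 × Fin m ⊕ Fin 0 × Fin p) := Matrix.rank_le_card_height _
      _ = 0 := by simp
      _ ≤ m * 0 + n := Nat.zero_le _
  · set x' : ℕ → Fin n → ℝ := fun k => if h : k < T then x ⟨k, h⟩ else 0 with hx'
    set u' : ℕ → Fin m → ℝ := fun k => if h : k < T then ud ⟨k, h⟩ else 0 with hu'
    have hxstep : ∀ k, k + 1 < T → x' (k+1) = A.mulVec (x' k) + B.mulVec (u' k) := by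
      intro k hk
      simp only [hx', hu', dif_pos hk, dif_pos (by omega : k < T)]
      exact hx1 k hk
    have hsf := state_formula A B x' u' hxstep
    have hidx : ∀ (j : Fin (T + 1 - L)) (i : Fin L), (j : ℕ) + (i : ℕ) < T := by
      intro j i
      have h1 := j.isLt
      have h2 := i.isLt
      omega
    set G : Matrix (Fin L × Fin p) (Fin L × Fin m) ℝ :=
      fun ic kb => if ((kb.1 : ℕ) < (ic.1 : ℕ)) then (C * A^((ic.1:ℕ)-1-(kb.1:ℕ)) * B) ic.2 kb.2
        else if kb.1 = ic.1 then D ic.2 kb.2 else 0 with hG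
    set O : Matrix (Fin L × Fin p) (Fin n) ℝ := fun ic s => (C * A^(ic.1 : ℕ)) ic.2 s with hO
    set M : Matrix ((Fin L × Fin m) ⊕ (Fin L × Fin p)) ((Fin L × Fin m) ⊕ Fin n) ℝ :=
      Matrix.fromBlocks 1 0 G O with hM
    set W : Matrix ((Fin L × Fin m) ⊕ Fin n) (Fin (T + 1 - L)) ℝ :=
      Matrix.fromRows (hankel m T L ud) (Matrix.of fun s j => x' (j : ℕ) s) with hW
    have key : Matrix.fromRows (hankel m T L ud) (hankel p T L yd) = M * W := by
      ext rc j
      cases rc with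
      | inl ia =>
        simp only [hM, hW, Matrix.mul_apply, Fintype.sum_sum_type,
          Matrix.fromBlocks_apply₁₁, Matrix.fromBlocks_apply₁₂,
          Matrix.fromRows_apply_inl, Matrix.fromRows_apply_inr,
          Matrix.one_apply, Matrix.zero_apply, zero_mul, Finset.sum_const_zero,
          add_zero, ite_mul, one_mul]
        rw [Finset.sum_ite_eq]
        simp [Matrix.fromRows_apply_inl]
      | inr ic =>
        obtain ⟨i, c⟩ := ic
        have hji : (j : ℕ) + (i : ℕ) < T := hidx j i
        -- RHS computation
        simp only [hM, hW, Matrix.mul_apply, Fintype.sum_sum_type,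
          Matrix.fromBlocks_apply₂₁, Matrix.fromBlocks_apply₂₂,
          Matrix.fromRows_apply_inl, Matrix.fromRows_apply_inr,
          Matrix.fromRows_apply_inr]
        -- LHS
        have hLHS : hankel p T L yd (i, c) j
            = C.mulVec (x' ((j:ℕ) + (i:ℕ))) c + D.mulVec (u' ((j:ℕ) + (i:ℕ))) c := by
          have := hx2 ⟨(j:ℕ) + (i:ℕ), hji⟩
          simp only [hankel, dif_pos hji]
          rw [show yd ⟨(j:ℕ) + (i:ℕ), hji⟩ = _ from this]
          simp [hx', hu', dif_pos hji]
        rw [hLHS, hsf i j hji]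
        -- expand C.mulVec, then sums
        rw [Matrix.mulVec_add, Matrix.mulVec_mulVec, mulVec_sum']
        -- hankel u entries
        have hhank : ∀ (k : Fin L) (b : Fin m),
            hankel m T L ud (k, b) j = u' ((j:ℕ) + (k:ℕ)) b := by
          intro k b
          simp [hankel, hu', dif_pos (hidx j k)]
        -- first sum over product
        have hsum1 : (∑ kb : Fin L × Fin m, G (i, c) kb * hankel m T L ud kb j)
            = (∑ k ∈ Finset.range (i:ℕ),
                C.mulVec (((A^((i:ℕ)-1-k)) * B).mulVec (u' ((j:ℕ) + k))) c)
              + D.mulVec (u' ((j:ℕ) + (i:ℕ))) c := by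
          rw [Fintype.sum_prod_type]
          have hterm : ∀ k : Fin L,
              (∑ b : Fin m, G (i, c) (k, b) * hankel m T L ud (k, b) j)
              = (if (k:ℕ) < (i:ℕ) then
                  C.mulVec (((A^((i:ℕ)-1-(k:ℕ))) * B).mulVec (u' ((j:ℕ) + (k:ℕ)))) c else 0)
                + (if k = i then D.mulVec (u' ((j:ℕ) + (i:ℕ))) c else 0) := by
            intro k
            by_cases hk : (k:ℕ) < (i:ℕ)
            · have hne : ¬ (k = i) := by intro h; subst h; omega
              simp only [hG, hhank, if_pos hk, if_neg hne, add_zero]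
              rw [Matrix.mulVec_mulVec, ← Matrix.mul_assoc]
              simp [Matrix.mulVec, dotProduct, mul_comm]
            · by_cases hke : k = i
              · subst hke
                simp only [hG, hhank, if_neg hk, if_pos rfl, zero_add]
                simp [Matrix.mulVec, dotProduct, mul_comm]
              · simp only [hG, hhank, if_neg hk, if_neg hke, zero_mul,
                  Finset.sum_const_zero, add_zero]
          rw [Finset.sum_congr rfl (fun k _ => hterm k), Finset.sum_add_distrib]
          congr 1
          · rw [Fin.sum_univ_eq_sum_range
              (fun k => if k < (i:ℕ) then
                C.mulVec (((A^((i:ℕ)-1-k)) * B).mulVec (u' ((j:ℕ) + k))) c else 0)]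
            rw [← Finset.sum_filter]
            congr 1
            ext k
            simp only [Finset.mem_filter, Finset.mem_range]
            have := i.isLt
            omega
          · simp [Finset.sum_ite_eq' Finset.univ i]
        rw [hsum1]
        have hsum2 : (∑ s : Fin n,
              O (i, c) s * (Matrix.of fun (t : Fin n) (r : Fin (T + 1 - L)) => x' (r:ℕ) t) s j)
            = (C * A^(i:ℕ)).mulVec (x' (j:ℕ)) c := by
          simp [hO, Matrix.mulVec, dotProduct]
        rw [hsum2, Pi.add_apply, Finset.sum_apply]
        ring
    rw [key]
    calc (M * W).rank ≤ W.rank := Matrix.rank_mul_le_right M W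
      _ ≤ Fintype.card ((Fin L × Fin m) ⊕ Fin n) := Matrix.rank_le_card_height W
      _ = m * L + n := by simp [mul_comm]
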